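/- Fix δ > 0 and assume the data x_1,...,x_n contain more than G + ⌈n π_max⌉ distinct points. If (θ_m) is a sequence in the RIMLE constrained parameter space Θ (eigenratio bound γ and estimated noise proportion (1/n)Σ_i τ_0(x_i,θ) ≤ π_max) with some covariance eigenvalue λ_{k,j,m} ↘ 0, then the improper pseudo-log-likelihood l_n(θ_m) = (1/n)Σ_i log(π_{0,m}δ + Σ_j π_{j,m} φ(x_i; μ_{j,m}, Σ_{j,m})) → -∞. -/

import Mathlib

open Real Matrix Filter Topology MeasureTheory

/-- smallest eigenvalue (infimum of the spectrum) of a real matrix -/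
noncomputable def lamMin {p : ℕ} (A : Matrix (Fin p) (Fin p) ℝ) : ℝ := sInf (spectrum ℝ A)

/-- largest eigenvalue (supremum of the spectrum) of a real matrix -/
noncomputable def lamMax {p : ℕ} (A : Matrix (Fin p) (Fin p) ℝ) : ℝ := sSup (spectrum ℝ A)

/-- The `p`-dimensional Gaussian density with mean `μ` and covariance matrix `S`. -/
noncomputable def gauss {p : ℕ} (x μ : Fin p → ℝ) (S : Matrix (Fin p) (Fin p) ℝ) : ℝ :=
  (2 * π) ^ (-(p : ℝ) / 2) * S.det ^ (-(1 : ℝ) / 2) *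
    Real.exp (-((x - μ) ⬝ᵥ (S⁻¹ *ᵥ (x - μ))) / 2)

/-- parameter vector θ = (π₀, (π_j), (μ_j), (Σ_j)) of a Gaussian mixture with
improper uniform (noise) component -/
abbrev Param (p G : ℕ) :=
  ℝ × (Fin G → ℝ) × (Fin G → (Fin p → ℝ)) × (Fin G → Matrix (Fin p) (Fin p) ℝ)

/-- noise proportion π₀ -/
def pi0 {p G : ℕ} (θ : Param p G) : ℝ := θ.1

/-- mixture proportions π_j -/
def wt {p G : ℕ} (θ : Param p G) : Fin G → ℝ := θ.2.1

/-- component means μ_j -/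
def mean {p G : ℕ} (θ : Param p G) : Fin G → Fin p → ℝ := θ.2.2.1

/-- component covariance matrices Σ_j -/
def covm {p G : ℕ} (θ : Param p G) : Fin G → Matrix (Fin p) (Fin p) ℝ := θ.2.2.2

/-- the improper pseudo-density ψ_δ(x, θ) = π₀δ + Σ_j π_j φ(x; μ_j, Σ_j) -/
noncomputable def psi {p G : ℕ} (δ : ℝ) (θ : Param p G) (x : Fin p → ℝ) : ℝ :=
  pi0 θ * δ + ∑ j, wt θ j * gauss x (mean θ j) (covm θ j)

/-- λ_min(θ): smallest eigenvalue among all component covariances -/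
noncomputable def lamMinP {p G : ℕ} (θ : Param p G) : ℝ := ⨅ j, lamMin (covm θ j)

/-- λ_max(θ): largest eigenvalue among all component covariances -/
noncomputable def lamMaxP {p G : ℕ} (θ : Param p G) : ℝ := ⨆ j, lamMax (covm θ j)

/-- basic parameter constraints: proportions nonnegative summing to one,
positive definite covariances, eigenratio λ_max(θ)/λ_min(θ) ≤ γ -/
def baseOK {p G : ℕ} (γ : ℝ) (θ : Param p G) : Prop :=
  0 ≤ pi0 θ ∧ (∀ j, 0 ≤ wt θ j) ∧ pi0 θ + ∑ j, wt θ j = 1 ∧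
    (∀ j, (covm θ j).PosDef) ∧ lamMaxP θ ≤ γ * lamMinP θ

/-- the finite-sample constrained parameter space Θ (eigenratio bound and
estimated noise proportion (1/n) Σ_i τ₀(x_i, θ) ≤ π_max) -/
def ThetaN {p G n : ℕ} (δ γ πmax : ℝ) (x : Fin n → Fin p → ℝ) : Set (Param p G) :=
  {θ | baseOK γ θ ∧ (1 / n : ℝ) * ∑ i, pi0 θ * δ / psi δ θ (x i) ≤ πmax}

/-- the improper pseudo-log-likelihood l_n(θ) = (1/n) Σ_i log ψ_δ(x_i, θ) -/
noncomputable def ln {p G n : ℕ} (δ : ℝ) (x : Fin n → Fin p → ℝ) (θ : Param p G) : ℝ :=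
  (1 / n : ℝ) * ∑ i, Real.log (psi δ θ (x i))


section Helpers

open Real Matrix Filter Topology

variable {p : ℕ}

lemma spec_fin (A : Matrix (Fin p) (Fin p) ℝ) : (spectrum ℝ A).Finite := A.finite_real_spectrum

lemma spec_nonempty (hp : 0 < p) {A : Matrix (Fin p) (Fin p) ℝ} (hA : A.IsHermitian) :
    (spectrum ℝ A).Nonempty :=
  ⟨hA.eigenvalues ⟨0, hp⟩, hA.eigenvalues_mem_spectrum_real _⟩

lemma lamMin_le {A : Matrix (Fin p) (Fin p) ℝ} {e : ℝ} (he : e ∈ spectrum ℝ A) :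
    lamMin A ≤ e := csInf_le (spec_fin A).bddBelow he

lemma le_lamMax {A : Matrix (Fin p) (Fin p) ℝ} {e : ℝ} (he : e ∈ spectrum ℝ A) :
    e ≤ lamMax A := le_csSup (spec_fin A).bddAbove he

lemma spec_pos {A : Matrix (Fin p) (Fin p) ℝ} (hA : A.PosDef) {e : ℝ}
    (he : e ∈ spectrum ℝ A) : 0 < e := by
  rw [hA.1.spectrum_real_eq_range_eigenvalues] at he
  obtain ⟨i, rfl⟩ := he
  exact hA.eigenvalues_pos i

lemma lamMin_pos (hp : 0 < p) {A : Matrix (Fin p) (Fin p) ℝ} (hA : A.PosDef) :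
    0 < lamMin A :=
  spec_pos hA ((spec_nonempty hp hA.1).csInf_mem (spec_fin A))

lemma lamMin_le_eig {A : Matrix (Fin p) (Fin p) ℝ} (hA : A.IsHermitian) (i : Fin p) :
    lamMin A ≤ hA.eigenvalues i := lamMin_le (hA.eigenvalues_mem_spectrum_real i)

lemma det_ge (hp : 0 < p) {A : Matrix (Fin p) (Fin p) ℝ} (hA : A.PosDef) {t : ℝ}
    (ht : 0 ≤ t) (h : t ≤ lamMin A) : t ^ p ≤ A.det := by
  have hd := hA.1.det_eq_prod_eigenvalues
  simp only [RCLike.ofReal_real_eq_id, id] at hd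
  rw [hd]
  calc t ^ p = ∏ _i : Fin p, t := by simp
  _ ≤ ∏ i, hA.1.eigenvalues i :=
    Finset.prod_le_prod (fun i _ => ht) (fun i _ => h.trans (lamMin_le_eig hA.1 i))

lemma rayleigh {A : Matrix (Fin p) (Fin p) ℝ} (hA : A.IsHermitian) {c : ℝ}
    (hc : ∀ i, c ≤ hA.eigenvalues i) (v : Fin p → ℝ) :
    c * (v ⬝ᵥ v) ≤ v ⬝ᵥ (A *ᵥ v) := by
  set U : Matrix (Fin p) (Fin p) ℝ := (hA.eigenvectorUnitary : Matrix (Fin p) (Fin p) ℝ) with hU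
  have hUU : U * star U = 1 := (Matrix.mem_unitaryGroup_iff).mp hA.eigenvectorUnitary.2
  have hsub : A - c • (1 : Matrix (Fin p) (Fin p) ℝ)
      = U * diagonal (fun i => hA.eigenvalues i - c) * star U := by
    have hst := hA.spectral_theorem
    have h1 : c • (1 : Matrix (Fin p) (Fin p) ℝ) = U * (c • (1 : Matrix (Fin p) (Fin p) ℝ)) * star U := by
      rw [Matrix.mul_smul, Matrix.smul_mul, mul_one, hUU]
    calc A - c • (1 : Matrix (Fin p) (Fin p) ℝ)
        = U * diagonal (RCLike.ofReal ∘ hA.eigenvalues) * star U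
          - U * (c • (1 : Matrix (Fin p) (Fin p) ℝ)) * star U := by rw [← h1]; exact congrArg (· - c • (1 : Matrix (Fin p) (Fin p) ℝ)) hst
      _ = U * (diagonal (RCLike.ofReal ∘ hA.eigenvalues) - c • (1 : Matrix (Fin p) (Fin p) ℝ)) * star U := by
          rw [Matrix.mul_sub, Matrix.sub_mul]
      _ = U * diagonal (fun i => hA.eigenvalues i - c) * star U := by
          rw [Matrix.smul_one_eq_diagonal, Matrix.diagonal_sub]
          congr 1
  have hpsd : (A - c • (1 : Matrix (Fin p) (Fin p) ℝ)).PosSemidef := by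
    rw [hsub, Matrix.star_eq_conjTranspose]
    exact (Matrix.PosSemidef.diagonal (fun i => sub_nonneg.mpr (hc i))).mul_mul_conjTranspose_same U
  have h0 := hpsd.dotProduct_mulVec_nonneg v
  rw [star_trivial, Matrix.sub_mulVec, Matrix.smul_mulVec, Matrix.one_mulVec,
    dotProduct_sub, dotProduct_smul] at h0
  have : c • (v ⬝ᵥ v) = c * (v ⬝ᵥ v) := rfl
  linarith [h0]

lemma inv_spec {A : Matrix (Fin p) (Fin p) ℝ} (hA : A.PosDef) {e : ℝ}
    (he : 0 < e) (hmem : e ∈ spectrum ℝ A⁻¹) : e⁻¹ ∈ spectrum ℝ A := by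
  have hu : IsUnit A := (Matrix.isUnit_iff_isUnit_det A).mpr
    (isUnit_iff_ne_zero.mpr hA.det_pos.ne')
  have hcoe : ((hu.unit⁻¹ : (Matrix (Fin p) (Fin p) ℝ)ˣ) : Matrix (Fin p) (Fin p) ℝ) = A⁻¹ := by
    rw [Matrix.coe_units_inv, hu.unit_spec]
  have h2 := (spectrum.inv_mem_iff (r := Units.mk0 e he.ne') (a := hu.unit⁻¹)).mp
    (by rw [hcoe]; exact hmem)
  simpa [hu.unit_spec] using h2

lemma quad_ge (hp : 0 < p) {A : Matrix (Fin p) (Fin p) ℝ} (hA : A.PosDef) {b : ℝ}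
    (hb : 0 < b) (h : lamMax A ≤ b) (v : Fin p → ℝ) :
    b⁻¹ * (v ⬝ᵥ v) ≤ v ⬝ᵥ (A⁻¹ *ᵥ v) := by
  have hAi : (A⁻¹).PosDef := hA.inv
  refine rayleigh hAi.1 (fun i => ?_) v
  set e := hAi.1.eigenvalues i with hei
  have hepos : 0 < e := hAi.eigenvalues_pos i
  have hmeme : e⁻¹ ∈ spectrum ℝ A := inv_spec hA hepos (hAi.1.eigenvalues_mem_spectrum_real i)
  have : e⁻¹ ≤ b := (le_lamMax hmeme).trans h
  calc b⁻¹ ≤ (e⁻¹)⁻¹ := inv_anti₀ (by positivity) this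
  _ = e := inv_inv e

lemma dot_self_nonneg (v : Fin p → ℝ) : 0 ≤ v ⬝ᵥ v :=
  Finset.sum_nonneg fun i _ => mul_self_nonneg _

lemma norm_sq_le_dot (v : Fin p → ℝ) : ‖v‖ ^ 2 ≤ v ⬝ᵥ v := by
  have h1 : ‖v‖ ≤ Real.sqrt (v ⬝ᵥ v) := by
    apply pi_norm_le_iff_of_nonneg (Real.sqrt_nonneg _) |>.mpr
    intro i
    rw [Real.norm_eq_abs]
    refine Real.abs_le_sqrt ?_
    rw [pow_two]
    exact Finset.single_le_sum (fun j _ => mul_self_nonneg (v j)) (Finset.mem_univ i)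
  calc ‖v‖ ^ 2 ≤ Real.sqrt (v ⬝ᵥ v) ^ 2 := by
        apply pow_le_pow_left₀ (norm_nonneg v) h1
  _ = v ⬝ᵥ v := Real.sq_sqrt (dot_self_nonneg v)

lemma detpow_le (hp : 0 < p) {S : Matrix (Fin p) (Fin p) ℝ} (hS : S.PosDef) {t : ℝ}
    (ht : 0 < t) (hmin : t ≤ lamMin S) :
    S.det ^ (-(1 : ℝ) / 2) ≤ t ^ (-(p : ℝ) / 2) := by
  have hdet : t ^ p ≤ S.det := det_ge hp hS ht.le hmin
  have htp : (0:ℝ) < t ^ p := pow_pos ht p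
  have h1 : ((t ^ p : ℝ)) ^ ((1:ℝ)/2) ≤ S.det ^ ((1:ℝ)/2) :=
    Real.rpow_le_rpow htp.le hdet (by norm_num)
  have h2 : ((t ^ p : ℝ)) ^ ((1:ℝ)/2) = t ^ ((p : ℝ)/2) := by
    rw [← Real.rpow_natCast t p, ← Real.rpow_mul ht.le]
    ring_nf
  have hdetpos : (0:ℝ) < S.det := hS.det_pos
  rw [neg_div, Real.rpow_neg hdetpos.le, neg_div, Real.rpow_neg ht.le]
  rw [h2] at h1
  exact inv_anti₀ (by positivity) h1

lemma gauss_le (hp : 0 < p) {S : Matrix (Fin p) (Fin p) ℝ} (hS : S.PosDef) {t b : ℝ}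
    (ht : 0 < t) (hb : 0 < b) (hmin : t ≤ lamMin S) (hmax : lamMax S ≤ b)
    (x μ : Fin p → ℝ) :
    gauss x μ S ≤ (2 * π) ^ (-(p : ℝ) / 2) * t ^ (-(p : ℝ) / 2) *
      Real.exp (-(b⁻¹ * ((x - μ) ⬝ᵥ (x - μ))) / 2) := by
  have hc : (0:ℝ) < (2 * π) ^ (-(p : ℝ) / 2) := Real.rpow_pos_of_pos (by positivity) _
  have hq := quad_ge hp hS hb hmax (x - μ)
  have hexp : Real.exp (-((x - μ) ⬝ᵥ (S⁻¹ *ᵥ (x - μ))) / 2) ≤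
      Real.exp (-(b⁻¹ * ((x - μ) ⬝ᵥ (x - μ))) / 2) := by
    apply Real.exp_le_exp.mpr
    linarith
  have hdp := detpow_le hp hS ht hmin
  have h1 : (0:ℝ) ≤ S.det ^ (-(1 : ℝ) / 2) := (Real.rpow_pos_of_pos hS.det_pos _).le
  have h2 : (0:ℝ) ≤ Real.exp (-((x - μ) ⬝ᵥ (S⁻¹ *ᵥ (x - μ))) / 2) := (Real.exp_pos _).le
  unfold gauss
  have step1 : (2 * π) ^ (-(p : ℝ) / 2) * S.det ^ (-(1 : ℝ) / 2) *
      Real.exp (-((x - μ) ⬝ᵥ (S⁻¹ *ᵥ (x - μ))) / 2) ≤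
      (2 * π) ^ (-(p : ℝ) / 2) * t ^ (-(p : ℝ) / 2) *
      Real.exp (-((x - μ) ⬝ᵥ (S⁻¹ *ᵥ (x - μ))) / 2) := by
    apply mul_le_mul_of_nonneg_right _ h2
    exact mul_le_mul_of_nonneg_left hdp hc.le
  refine step1.trans ?_
  apply mul_le_mul_of_nonneg_left hexp
  positivity

lemma gauss_pos {S : Matrix (Fin p) (Fin p) ℝ} (hS : S.PosDef) (x μ : Fin p → ℝ) :
    0 < gauss x μ S := by
  unfold gauss
  have := hS.det_pos
  positivity

lemma tendsto_aux {K0 K1 A : ℝ} (hA : 0 < A) :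
    Tendsto (fun u : ℝ => K0 + K1 * Real.log u - A * u) atTop atBot := by
  have hc : (0:ℝ) < A / (2 * (|K1| + 1)) := by positivity
  have hev := (Real.isLittleO_log_id_atTop).def hc
  have hev2 : ∀ᶠ u : ℝ in atTop, K0 + K1 * Real.log u - A * u ≤ K0 - (A/2) * u := by
    filter_upwards [hev, eventually_ge_atTop (0:ℝ)] with u hu hu0
    simp only [Real.norm_eq_abs, id] at hu
    have h1 : K1 * Real.log u ≤ |K1| * |Real.log u| := by
      calc K1 * Real.log u ≤ |K1 * Real.log u| := le_abs_self _
      _ = |K1| * |Real.log u| := abs_mul _ _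
    have h2 : |K1| * |Real.log u| ≤ |K1| * (A / (2 * (|K1| + 1)) * u) := by
      apply mul_le_mul_of_nonneg_left _ (abs_nonneg K1)
      calc |Real.log u| ≤ A / (2 * (|K1| + 1)) * |u| := hu
      _ = A / (2 * (|K1| + 1)) * u := by rw [abs_of_nonneg hu0]
    have h3 : |K1| * (A / (2 * (|K1| + 1)) * u) ≤ (A/2) * u := by
      rw [← mul_assoc]
      apply mul_le_mul_of_nonneg_right _ hu0
      have hx : (0:ℝ) < |K1| + 1 := by positivity
      have hh : A / (2 * (|K1| + 1)) = (A/2) / (|K1|+1) := by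
        field_simp
      rw [hh, mul_comm, div_mul_eq_mul_div, div_le_iff₀ hx]
      nlinarith [abs_nonneg K1, hA.le]
    nlinarith
  apply tendsto_atBot_mono' atTop hev2
  have h4 : Tendsto (fun u : ℝ => (A/2) * u) atTop atTop :=
    (tendsto_id.const_mul_atTop (by positivity))
  have h5 : Tendsto (fun u : ℝ => -((A/2) * u)) atTop atBot := tendsto_neg_atTop_atBot.comp h4
  have h6 : Tendsto (fun u : ℝ => K0 + -((A/2) * u)) atTop atBot := tendsto_atBot_add_const_left atTop K0 h5
  refine h6.congr (fun u => by ring)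

end Helpers

set_option maxHeartbeats 1000000 in
theorem stmt9aux {p G n : ℕ} (hp : 0 < p) (hG : 0 < G) (hn : 0 < n)
    (δ γ πmax : ℝ) (hδ : 0 < δ) (hγ : 1 ≤ γ) (hπ0 : 0 < πmax) (hπ1 : πmax < 1)
    (x : Fin n → Fin p → ℝ)
    (hcard : G + Nat.ceil ((n : ℝ) * πmax) < (Set.range x).ncard)
    (θ : ℕ → Param p G) (hθ : ∀ m, θ m ∈ ThetaN δ γ πmax x)
    (j : Fin G) (lam : ℕ → ℝ)
    (hmem : ∀ m, lam m ∈ spectrum ℝ (covm (θ m) j))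
    (hto : Tendsto lam atTop (nhds 0)) :
    Tendsto (fun m => ln δ x (θ m)) atTop atBot := by
    classical
  haveI : Nonempty (Fin G) := ⟨⟨0, hG⟩⟩
  have hbase : ∀ m, baseOK γ (θ m) := fun m => (hθ m).1
  have hpi0 : ∀ m, 0 ≤ pi0 (θ m) := fun m => (hbase m).1
  have hwt : ∀ m (k : Fin G), 0 ≤ wt (θ m) k := fun m => (hbase m).2.1
  have hsum1 : ∀ m, pi0 (θ m) + ∑ k, wt (θ m) k = 1 := fun m => (hbase m).2.2.1
  have hpd : ∀ m k, (covm (θ m) k).PosDef := fun m => (hbase m).2.2.2.1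
  have hratio : ∀ m, lamMaxP (θ m) ≤ γ * lamMinP (θ m) := fun m => (hbase m).2.2.2.2
  have hγ0 : (0:ℝ) < γ := lt_of_lt_of_le one_pos hγ
  set t : ℕ → ℝ := fun m => lamMinP (θ m) with htdef
  have htmin : ∀ m k, t m ≤ lamMin (covm (θ m) k) := by
    intro m k
    exact ciInf_le (Set.finite_range _).bddBelow k
  have htpos : ∀ m, 0 < t m := by
    intro m
    obtain ⟨k0, hk0⟩ := Finite.exists_min (fun k : Fin G => lamMin (covm (θ m) k))
    exact lt_of_lt_of_le (lamMin_pos hp (hpd m k0)) (le_ciInf hk0)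
  have htmax : ∀ m k, lamMax (covm (θ m) k) ≤ γ * t m := by
    intro m k
    exact (le_ciSup (Set.finite_range _).bddAbove k).trans (hratio m)
  have htlam : ∀ m, t m ≤ lam m := fun m => (htmin m j).trans (lamMin_le (hmem m))
  have ht0' : Tendsto t atTop (𝓝 0) :=
    tendsto_of_tendsto_of_tendsto_of_le_of_le tendsto_const_nhds hto
      (fun m => (htpos m).le) htlam
  have ht0 : Tendsto t atTop (𝓝[>] (0:ℝ)) :=
    tendsto_nhdsWithin_of_tendsto_nhds_of_eventually_within _ ht0'
      (Filter.Eventually.of_forall htpos)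
  have hu : Tendsto (fun m => (t m)⁻¹) atTop atTop := ht0.inv_tendsto_nhdsGT_zero
  -- counting setup
  set V : Finset (Fin p → ℝ) := Finset.image x Finset.univ with hVdef
  have hVcard : G + Nat.ceil ((n : ℝ) * πmax) < V.card := by
    have hrv : (Set.range x) = (V : Set (Fin p → ℝ)) := by
      rw [hVdef]; simp [Finset.coe_image]
    rwa [hrv, Set.ncard_coe_finset] at hcard
  have hV2 : 1 < V.card := by omega
  obtain ⟨v1, hv1, v2, hv2, hv12⟩ := Finset.one_lt_card.mp hV2
  set P := (V ×ˢ V).filter (fun q => q.1 ≠ q.2) with hPdef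
  have hPne : P.Nonempty := by
    refine ⟨(v1, v2), ?_⟩
    rw [hPdef, Finset.mem_filter, Finset.mem_product]
    exact ⟨⟨hv1, hv2⟩, hv12⟩
  set d : ℝ := P.inf' hPne (fun q => ‖q.1 - q.2‖) with hddef
  have hdpos : 0 < d := by
    rw [hddef]
    refine (Finset.lt_inf'_iff hPne).mpr ?_
    rintro ⟨u, v⟩ hq
    rw [hPdef, Finset.mem_filter] at hq
    have huv : u - v ≠ 0 := sub_ne_zero.mpr hq.2
    simpa [norm_pos_iff] using huv
  have hdle : ∀ u ∈ V, ∀ v ∈ V, u ≠ v → d ≤ ‖u - v‖ := by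
    intro u hu' v hv' huv
    rw [hddef]
    refine Finset.inf'_le (f := fun q => ‖q.1 - q.2‖) (b := (u, v)) ?_
    rw [hPdef, Finset.mem_filter, Finset.mem_product]
    exact ⟨⟨hu', hv'⟩, huv⟩
  set ε : ℝ := d / 3 with hεdef
  have hε : 0 < ε := by positivity
  set F : ℕ → Finset (Fin n) := fun m =>
    Finset.univ.filter (fun i => ∀ k, ε ≤ ‖x i - mean (θ m) k‖) with hFdef
  have hFcard : ∀ m, Nat.ceil ((n : ℝ) * πmax) + 1 ≤ (F m).card := by
    intro m
    set NV := V.filter (fun v => ∃ k, ‖v - mean (θ m) k‖ < ε) with hNVdef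
    have hNVG : NV.card ≤ G := by
      have hmap : ∀ v ∈ NV,
          (if h : ∃ k, ‖v - mean (θ m) k‖ < ε then h.choose else (⟨0, hG⟩ : Fin G))
            ∈ (Finset.univ : Finset (Fin G)) := fun _ _ => Finset.mem_univ _
      have hinj : Set.InjOn
          (fun v => if h : ∃ k, ‖v - mean (θ m) k‖ < ε then h.choose else (⟨0, hG⟩ : Fin G))
          ↑NV := by
        intro u hu' v hv' heq
        rw [Finset.mem_coe, hNVdef, Finset.mem_filter] at hu' hv'
        obtain ⟨huV, hue⟩ := hu'
        obtain ⟨hvV, hve⟩ := hv'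
        simp only [dif_pos hue, dif_pos hve] at heq
        by_contra huv
        have h1 : ‖u - mean (θ m) hue.choose‖ < ε := hue.choose_spec
        have h2 : ‖v - mean (θ m) hve.choose‖ < ε := hve.choose_spec
        rw [heq] at h1
        have h3 : d ≤ ‖u - v‖ := hdle u huV v hvV huv
        have h4 : ‖u - v‖ ≤ ‖u - mean (θ m) hve.choose‖ + ‖v - mean (θ m) hve.choose‖ := by
          calc ‖u - v‖ = ‖(u - mean (θ m) hve.choose) - (v - mean (θ m) hve.choose)‖ := by
                congr 1; abel
          _ ≤ _ := norm_sub_le _ _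
        have hε3 : ε = d / 3 := hεdef
        linarith
      calc NV.card ≤ (Finset.univ : Finset (Fin G)).card :=
            Finset.card_le_card_of_injOn _ hmap hinj
      _ = G := by simp
    have hsubNV : NV ⊆ V := Finset.filter_subset _ _
    have hFV : Nat.ceil ((n : ℝ) * πmax) + 1 ≤ (V \ NV).card := by
      rw [Finset.card_sdiff_of_subset hsubNV]
      omega
    have hcardle : (V \ NV).card ≤ (F m).card := by
      apply Finset.card_le_card_of_injOn
        (fun v => if h : ∃ i, x i = v then h.choose else (⟨0, hn⟩ : Fin n))
      · intro v hv'
        rw [Finset.mem_coe, Finset.mem_sdiff] at hv'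
        obtain ⟨hvV, hvNV⟩ := hv'
        have hex : ∃ i, x i = v := by
          rw [hVdef, Finset.mem_image] at hvV
          obtain ⟨i, _, hi⟩ := hvV
          exact ⟨i, hi⟩
        simp only [dif_pos hex]
        rw [Finset.mem_coe, hFdef, Finset.mem_filter]
        refine ⟨Finset.mem_univ _, fun k => ?_⟩
        rw [hex.choose_spec]
        by_contra hlt
        push_neg at hlt
        exact hvNV (Finset.mem_filter.mpr ⟨hvV, ⟨k, hlt⟩⟩)
      · intro u hu' v hv' heq
        rw [Finset.mem_coe, Finset.mem_sdiff] at hu' hv'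
        have hexu : ∃ i, x i = u := by
          have := hu'.1
          rw [hVdef, Finset.mem_image] at this
          obtain ⟨i, _, hi⟩ := this
          exact ⟨i, hi⟩
        have hexv : ∃ i, x i = v := by
          have := hv'.1
          rw [hVdef, Finset.mem_image] at this
          obtain ⟨i, _, hi⟩ := this
          exact ⟨i, hi⟩
        simp only [dif_pos hexu, dif_pos hexv] at heq
        rw [← hexu.choose_spec, ← hexv.choose_spec, heq]
    omega
  -- per-m quantities
  set M : ℝ := (n : ℝ) * πmax with hMdef
  have hM : 0 ≤ M := by positivity
  set c0 : ℝ := (2 * π) ^ (-(p : ℝ) / 2) with hc0def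
  have hc0 : 0 < c0 := Real.rpow_pos_of_pos (by positivity) _
  set s : ℕ → ℝ := fun m => c0 * t m ^ (-(p : ℝ) / 2) *
    Real.exp (-((γ * t m)⁻¹ * ε ^ 2) / 2) with hsdef
  set bb : ℕ → ℝ := fun m => c0 * t m ^ (-(p : ℝ) / 2) with hbbdef
  have hspos : ∀ m, 0 < s m := by
    intro m
    simp only [hsdef]
    exact mul_pos (mul_pos hc0 (Real.rpow_pos_of_pos (htpos m) _)) (Real.exp_pos _)
  have hbbpos : ∀ m, 0 < bb m := by
    intro m
    simp only [hbbdef]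
    exact mul_pos hc0 (Real.rpow_pos_of_pos (htpos m) _)
  have hgb : ∀ m k (y : Fin p → ℝ), gauss y (mean (θ m) k) (covm (θ m) k) ≤
      c0 * t m ^ (-(p:ℝ)/2) *
        Real.exp (-((γ * t m)⁻¹ * ((y - mean (θ m) k) ⬝ᵥ (y - mean (θ m) k))) / 2) := by
    intro m k y
    exact gauss_le hp (hpd m k) (htpos m) (mul_pos hγ0 (htpos m)) (htmin m k) (htmax m k) y _
  have hfar : ∀ m, ∀ i ∈ F m, ∀ k, gauss (x i) (mean (θ m) k) (covm (θ m) k) ≤ s m := by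
    intro m i hi k
    refine (hgb m k (x i)).trans ?_
    simp only [hsdef]
    apply mul_le_mul_of_nonneg_left _
      (mul_pos hc0 (Real.rpow_pos_of_pos (htpos m) _)).le
    apply Real.exp_le_exp.mpr
    have hεle : ε ≤ ‖x i - mean (θ m) k‖ := by
      rw [hFdef, Finset.mem_filter] at hi
      exact hi.2 k
    have hw : ε ^ 2 ≤ (x i - mean (θ m) k) ⬝ᵥ (x i - mean (θ m) k) :=
      (pow_le_pow_left₀ hε.le hεle 2).trans (norm_sq_le_dot _)
    have hinv : (0:ℝ) ≤ (γ * t m)⁻¹ := (inv_nonneg).mpr (mul_pos hγ0 (htpos m)).le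
    nlinarith [mul_le_mul_of_nonneg_left hw hinv]
  have hany : ∀ m k (y : Fin p → ℝ), gauss y (mean (θ m) k) (covm (θ m) k) ≤ bb m := by
    intro m k y
    refine (hgb m k y).trans ?_
    simp only [hbbdef]
    have he1 : Real.exp (-((γ * t m)⁻¹ * ((y - mean (θ m) k) ⬝ᵥ (y - mean (θ m) k))) / 2) ≤ 1 := by
      apply Real.exp_le_one_iff.mpr
      have h1 : (0:ℝ) ≤ (γ * t m)⁻¹ := (inv_nonneg).mpr (mul_pos hγ0 (htpos m)).le
      have h2 := dot_self_nonneg (y - mean (θ m) k)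
      nlinarith
    have hbp : (0:ℝ) < c0 * t m ^ (-(p:ℝ)/2) :=
      mul_pos hc0 (Real.rpow_pos_of_pos (htpos m) _)
    nlinarith
  have hψpos : ∀ m i, 0 < psi δ (θ m) (x i) := by
    intro m i
    unfold psi
    rcases lt_or_eq_of_le (hpi0 m) with hlt | heq
    · apply add_pos_of_pos_of_nonneg (mul_pos hlt hδ)
      exact Finset.sum_nonneg fun k _ => mul_nonneg (hwt m k) (gauss_pos (hpd m k) _ _).le
    · apply add_pos_of_nonneg_of_pos (mul_nonneg (hpi0 m) hδ.le)
      have hsw : ∑ k, wt (θ m) k = 1 := by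
        have := hsum1 m
        rw [← heq] at this
        linarith
      have hex : ∃ k, wt (θ m) k ≠ 0 := by
        by_contra hall
        push_neg at hall
        rw [Finset.sum_congr rfl (fun k _ => hall k)] at hsw
        simp at hsw
      obtain ⟨k, hk⟩ := hex
      apply Finset.sum_pos' (fun k' _ => mul_nonneg (hwt m k') (gauss_pos (hpd m k') _ _).le)
      exact ⟨k, Finset.mem_univ k, mul_pos (lt_of_le_of_ne (hwt m k) (Ne.symm hk))
        (gauss_pos (hpd m k) _ _)⟩
  have hψfar : ∀ m, ∀ i ∈ F m, psi δ (θ m) (x i) ≤ pi0 (θ m) * δ + s m := by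
    intro m i hi
    unfold psi
    have h1 : ∑ k, wt (θ m) k * gauss (x i) (mean (θ m) k) (covm (θ m) k)
        ≤ ∑ k, wt (θ m) k * s m :=
      Finset.sum_le_sum fun k _ => mul_le_mul_of_nonneg_left (hfar m i hi k) (hwt m k)
    have h2 : ∑ k, wt (θ m) k * s m = (∑ k, wt (θ m) k) * s m := (Finset.sum_mul _ _ _).symm
    have h3 : (∑ k, wt (θ m) k) ≤ 1 := by
      have := hsum1 m
      have := hpi0 m
      linarith
    have h4 : (∑ k, wt (θ m) k) * s m ≤ s m := by
      have := mul_le_mul_of_nonneg_right h3 (hspos m).le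
      linarith
    linarith
  have hψany : ∀ m i, psi δ (θ m) (x i) ≤ δ + bb m := by
    intro m i
    unfold psi
    have h1 : ∑ k, wt (θ m) k * gauss (x i) (mean (θ m) k) (covm (θ m) k)
        ≤ ∑ k, wt (θ m) k * bb m :=
      Finset.sum_le_sum fun k _ => mul_le_mul_of_nonneg_left (hany m k (x i)) (hwt m k)
    have h2 : ∑ k, wt (θ m) k * bb m = (∑ k, wt (θ m) k) * bb m := (Finset.sum_mul _ _ _).symm
    have h3 : (∑ k, wt (θ m) k) ≤ 1 := by
      have := hsum1 m
      have := hpi0 m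
      linarith
    have h4 : (∑ k, wt (θ m) k) * bb m ≤ bb m := by
      have := mul_le_mul_of_nonneg_right h3 (hbbpos m).le
      linarith
    have h5 : pi0 (θ m) ≤ 1 := by
      have := hsum1 m
      have h6 : (0:ℝ) ≤ ∑ k, wt (θ m) k := Finset.sum_nonneg fun k _ => hwt m k
      linarith
    have h7 : pi0 (θ m) * δ ≤ δ := by nlinarith [hδ.le]
    linarith
  have hcardM : ∀ m, M + 1 ≤ ((F m).card : ℝ) := by
    intro m
    have h1 := hFcard m
    have h2 : M ≤ (Nat.ceil M : ℝ) := Nat.le_ceil M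
    have h3 : ((Nat.ceil M + 1 : ℕ) : ℝ) ≤ ((F m).card : ℝ) := by
      exact_mod_cast hFcard m
    push_cast at h3
    linarith
  have hnoise : ∀ m, pi0 (θ m) * δ ≤ M * s m := by
    intro m
    have hcons := (hθ m).2
    have hnpos : (0:ℝ) < n := by exact_mod_cast hn
    set a := pi0 (θ m) * δ with hadef
    have ha : 0 ≤ a := mul_nonneg (hpi0 m) hδ.le
    have haspos : 0 < a + s m := by
      have := hspos m
      linarith
    have hsumM : ∑ i, a / psi δ (θ m) (x i) ≤ M := by
      rw [hMdef]
      have h1 := mul_le_mul_of_nonneg_left hcons hnpos.le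
      rw [← mul_assoc] at h1
      rw [mul_one_div, div_self hnpos.ne', one_mul] at h1
      exact h1
    have hterm : ∀ i ∈ F m, a / (a + s m) ≤ a / psi δ (θ m) (x i) := by
      intro i hi
      exact div_le_div_of_nonneg_left ha (hψpos m i) (hψfar m i hi)
    have hFsum : ((F m).card : ℝ) * (a / (a + s m)) ≤ ∑ i ∈ F m, a / psi δ (θ m) (x i) := by
      have := Finset.card_nsmul_le_sum (F m) (fun i => a / psi δ (θ m) (x i)) (a / (a + s m)) hterm
      rwa [nsmul_eq_mul] at this
    have hsub : ∑ i ∈ F m, a / psi δ (θ m) (x i) ≤ ∑ i, a / psi δ (θ m) (x i) :=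
      Finset.sum_le_sum_of_subset_of_nonneg (Finset.subset_univ _)
        (fun i _ _ => div_nonneg ha (hψpos m i).le)
    have hq : 0 ≤ a / (a + s m) := div_nonneg ha haspos.le
    have key : (M + 1) * (a / (a + s m)) ≤ M :=
      le_trans (mul_le_mul_of_nonneg_right (hcardM m) hq) (hFsum.trans (hsub.trans hsumM))
    have key2 : (M + 1) * a ≤ M * (a + s m) := by
      rw [mul_div_assoc'] at key
      have := (div_le_iff₀ haspos).mp key
      linarith
    nlinarith
  have hψfar2 : ∀ m, ∀ i ∈ F m, psi δ (θ m) (x i) ≤ (M + 1) * s m := by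
    intro m i hi
    have := hψfar m i hi
    have := hnoise m
    nlinarith
  -- main per-m inequality
  have hmain : ∀ m, t m ≤ 1 → (M + 1) * s m ≤ 1 → 1 ≤ δ + bb m →
      ln δ x (θ m) ≤ (1/n : ℝ) *
        ((M+1) * Real.log ((M+1) * s m) + n * Real.log (δ + bb m)) := by
    intro m ht1 hs1 hb1
    unfold ln
    apply mul_le_mul_of_nonneg_left _ (by positivity)
    have hsplit : ∑ i, Real.log (psi δ (θ m) (x i)) =
        ∑ i ∈ Finset.univ \ F m, Real.log (psi δ (θ m) (x i))
          + ∑ i ∈ F m, Real.log (psi δ (θ m) (x i)) :=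
      (Finset.sum_sdiff (Finset.subset_univ (F m))).symm
    have hMs : (0:ℝ) < (M+1) * s m := mul_pos (by linarith) (hspos m)
    have hF1 : ∑ i ∈ F m, Real.log (psi δ (θ m) (x i)) ≤
        ((F m).card : ℝ) * Real.log ((M+1) * s m) := by
      calc ∑ i ∈ F m, Real.log (psi δ (θ m) (x i)) ≤
          ∑ _i ∈ F m, Real.log ((M+1) * s m) :=
            Finset.sum_le_sum fun i hi =>
              Real.log_le_log (hψpos m i) (hψfar2 m i hi)
      _ = ((F m).card : ℝ) * Real.log ((M+1) * s m) := by
          rw [Finset.sum_const, nsmul_eq_mul]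
    have hlogneg : Real.log ((M+1) * s m) ≤ 0 := Real.log_nonpos hMs.le hs1
    have hF2 : ((F m).card : ℝ) * Real.log ((M+1) * s m) ≤ (M+1) * Real.log ((M+1) * s m) :=
      mul_le_mul_of_nonpos_right (hcardM m) hlogneg
    have hlogpos : 0 ≤ Real.log (δ + bb m) := Real.log_nonneg hb1
    have hG1 : ∑ i ∈ Finset.univ \ F m, Real.log (psi δ (θ m) (x i)) ≤
        (n : ℝ) * Real.log (δ + bb m) := by
      calc ∑ i ∈ Finset.univ \ F m, Real.log (psi δ (θ m) (x i)) ≤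
          ∑ _i ∈ Finset.univ \ F m, Real.log (δ + bb m) :=
            Finset.sum_le_sum fun i _ =>
              Real.log_le_log (hψpos m i) (hψany m i)
      _ = ((Finset.univ \ F m).card : ℝ) * Real.log (δ + bb m) := by
          rw [Finset.sum_const, nsmul_eq_mul]
      _ ≤ (n : ℝ) * Real.log (δ + bb m) := by
          apply mul_le_mul_of_nonneg_right _ hlogpos
          have : (Finset.univ \ F m).card ≤ n := by
            calc (Finset.univ \ F m).card ≤ (Finset.univ : Finset (Fin n)).card :=
                  Finset.card_le_card (Finset.sdiff_subset)
            _ = n := by simp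
          exact_mod_cast this
    rw [hsplit]
    linarith
  -- limit function
  set K0 : ℝ := (M+1) * (Real.log (M+1) + Real.log c0) + n * Real.log (δ + c0) with hK0def
  set K1 : ℝ := ((M+1) + n) * ((p:ℝ)/2) with hK1def
  set A : ℝ := (M+1) * ε^2 / (2*γ) with hAdef
  have hApos : 0 < A := by
    rw [hAdef]
    exact div_pos (mul_pos (by linarith) (pow_pos hε 2)) (by linarith)
  have hΦ : Tendsto (fun u : ℝ => (1/n : ℝ) * (K0 + K1 * Real.log u - A * u)) atTop atBot := by
    have h1 := tendsto_aux (K0 := K0) (K1 := K1) hApos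
    have hnpos : (0:ℝ) < 1/n := by
      have : (0:ℝ) < n := by exact_mod_cast hn
      positivity
    exact h1.const_mul_atBot hnpos
  have hcomp : Tendsto (fun m => (1/n:ℝ) * (K0 + K1 * Real.log (t m)⁻¹ - A * (t m)⁻¹))
      atTop atBot := hΦ.comp hu
  apply tendsto_atBot_mono' atTop _ hcomp
  -- eventual conditions
  have hev1 : ∀ᶠ m in atTop, t m ≤ 1 :=
    (ht0'.eventually_lt_const one_pos).mono fun m h => h.le
  have hev2 : ∀ᶠ m in atTop, (M + 1) * s m ≤ 1 := by
    have hb2 : (0:ℝ) < ε^2 / (2*γ) := div_pos (pow_pos hε 2) (by linarith)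
    have hbase2 := tendsto_rpow_mul_exp_neg_mul_atTop_nhds_zero ((p:ℝ)/2) (ε^2/(2*γ)) hb2
    have hcm : Tendsto (fun m => ((M+1) * c0) * (((t m)⁻¹) ^ ((p:ℝ)/2) *
        Real.exp (-(ε^2/(2*γ)) * (t m)⁻¹))) atTop (𝓝 (((M+1) * c0) * 0)) :=
      (tendsto_const_nhds.mul (hbase2.comp hu))
    rw [mul_zero] at hcm
    have heq : ∀ m, (M+1) * s m = ((M+1) * c0) * (((t m)⁻¹) ^ ((p:ℝ)/2) *
        Real.exp (-(ε^2/(2*γ)) * (t m)⁻¹)) := by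
      intro m
      have ht := htpos m
      simp only [hsdef]
      have e1 : (t m) ^ (-(p:ℝ)/2) = ((t m)⁻¹) ^ ((p:ℝ)/2) := by
        rw [Real.inv_rpow ht.le, neg_div, Real.rpow_neg ht.le]
      have e2 : -((γ * t m)⁻¹ * ε ^ 2) / 2 = -(ε^2/(2*γ)) * (t m)⁻¹ := by
        rw [mul_inv]
        field_simp
      rw [e1, e2]
      ring
    have := hcm
    rw [show (fun m => ((M+1) * c0) * (((t m)⁻¹) ^ ((p:ℝ)/2) *
        Real.exp (-(ε^2/(2*γ)) * (t m)⁻¹))) = (fun m => (M+1) * s m) from funext fun m => (heq m).symm] at this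
    exact (this.eventually_lt_const one_pos).mono fun m h => h.le
  have hev3 : ∀ᶠ m in atTop, 1 ≤ δ + bb m := by
    have hbbt : Tendsto bb atTop atTop := by
      have h1 : Tendsto (fun u : ℝ => u ^ ((p:ℝ)/2)) atTop atTop :=
        tendsto_rpow_atTop (by positivity)
      have h2 : Tendsto (fun m => ((t m)⁻¹) ^ ((p:ℝ)/2)) atTop atTop := h1.comp hu
      have h3 : Tendsto (fun m => c0 * (((t m)⁻¹) ^ ((p:ℝ)/2))) atTop atTop :=
        h2.const_mul_atTop hc0
      refine h3.congr fun m => ?_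
      have ht := htpos m
      have e1 : (t m) ^ (-(p:ℝ)/2) = ((t m)⁻¹) ^ ((p:ℝ)/2) := by
        rw [Real.inv_rpow ht.le, neg_div, Real.rpow_neg ht.le]
      simp only [hbbdef]
      rw [e1]
    exact (hbbt.eventually_ge_atTop 1).mono fun m h => by linarith
  filter_upwards [hev1, hev2, hev3] with m h1 h2 h3
  refine (hmain m h1 h2 h3).trans ?_
  have hnn : (0:ℝ) ≤ 1/n := by positivity
  apply mul_le_mul_of_nonneg_left _ hnn
  have htm := htpos m
  have hM1 : (0:ℝ) < M + 1 := by linarith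
  have htpne : t m ^ (-(p:ℝ)/2) ≠ 0 := (Real.rpow_pos_of_pos htm _).ne'
  have hsne : s m ≠ 0 := (hspos m).ne'
  have hlog1 : Real.log ((M+1) * s m) =
      Real.log (M+1) + Real.log c0 + (-(p:ℝ)/2) * Real.log (t m)
        + (-((γ * t m)⁻¹ * ε^2)/2) := by
    rw [show (M+1) * s m = (M+1) * (c0 * t m ^ (-(p:ℝ)/2) *
        Real.exp (-((γ * t m)⁻¹ * ε ^ 2) / 2)) from by simp only [hsdef]]
    rw [Real.log_mul hM1.ne' (by
      exact (mul_pos (mul_pos hc0 (Real.rpow_pos_of_pos htm _)) (Real.exp_pos _)).ne'),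
      Real.log_mul (mul_ne_zero hc0.ne' htpne) (Real.exp_ne_zero _),
      Real.log_mul hc0.ne' htpne, Real.log_exp, Real.log_rpow htm]
    ring
  have h1p : (1:ℝ) ≤ t m ^ (-(p:ℝ)/2) := by
    apply Real.one_le_rpow_of_pos_of_le_one_of_nonpos htm h1
    rw [neg_div]
    exact neg_nonpos.mpr (by positivity)
  have hδc0 : (0:ℝ) < δ + c0 := by linarith
  have hble : δ + bb m ≤ (δ + c0) * t m ^ (-(p:ℝ)/2) := by
    simp only [hbbdef]
    have hd1 : δ ≤ δ * t m ^ (-(p:ℝ)/2) := le_mul_of_one_le_right hδ.le h1p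
    rw [add_mul]
    linarith
  have hlog2 : Real.log (δ + bb m) ≤ Real.log (δ + c0) + (-(p:ℝ)/2) * Real.log (t m) := by
    have hposb : 0 < δ + bb m := by linarith [hbbpos m]
    calc Real.log (δ + bb m) ≤ Real.log ((δ + c0) * t m ^ (-(p:ℝ)/2)) :=
          Real.log_le_log hposb hble
    _ = _ := by rw [Real.log_mul hδc0.ne' htpne, Real.log_rpow htm]
  have hE : (M+1) * (-((γ * t m)⁻¹ * ε^2)/2) = -(A * (t m)⁻¹) := by
    rw [hAdef, mul_inv]
    field_simp
  have hstep := mul_le_mul_of_nonneg_left hlog2 (Nat.cast_nonneg n : (0:ℝ) ≤ n)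
  calc (M+1) * Real.log ((M+1) * s m) + n * Real.log (δ + bb m)
      ≤ (M+1) * Real.log ((M+1) * s m)
        + n * (Real.log (δ + c0) + (-(p:ℝ)/2) * Real.log (t m)) := by linarith
    _ = K0 + K1 * (-Real.log (t m)) - A * (t m)⁻¹ := by
        rw [hlog1, hK0def, hK1def]
        linear_combination hE
    _ = K0 + K1 * Real.log (t m)⁻¹ - A * (t m)⁻¹ := by rw [Real.log_inv]

/-- Lemma 2 of the paper: for δ > 0, with more than G + ⌈nπ_max⌉ distinct
data points, if along a sequence in the RIMLE constrained parameter space Θ some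
covariance eigenvalue tends to 0, the improper pseudo-log-likelihood tends to -∞. -/
theorem stmt9 {p G n : ℕ} (hp : 0 < p) (hG : 0 < G) (hn : 0 < n)
    (δ γ πmax : ℝ) (hδ : 0 < δ) (hγ : 1 ≤ γ) (hπ0 : 0 < πmax) (hπ1 : πmax < 1)
    (x : Fin n → Fin p → ℝ)
    (hcard : G + Nat.ceil ((n : ℝ) * πmax) < (Set.range x).ncard)
    (θ : ℕ → Param p G) (hθ : ∀ m, θ m ∈ ThetaN δ γ πmax x)
    (j : Fin G) (lam : ℕ → ℝ)
    (hmem : ∀ m, lam m ∈ spectrum ℝ (covm (θ m) j))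
    (hto : Tendsto lam atTop (nhds 0)) :
    Tendsto (fun m => ln δ x (θ m)) atTop atBot := by
  exact stmt9aux hp hG hn δ γ πmax hδ hγ hπ0 hπ1 x hcard θ hθ j lam hmem hto
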